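/- Let K : ℝⁿ → ℝᵐ be a linear map, let N be a norm on ℝᵐ with dual norm N*(p) = sup{⟨p, z⟩ : N(z) ≤ 1}, let α > 0 and y ∈ ℝⁿ. Then strong duality holds between the primal generalized ROF problem and its dual: min_{u ∈ ℝⁿ} ( α·N(Ku) + (1/2)‖u − y‖² ) = (1/2)‖y‖² − min_{p ∈ ℝᵐ, N*(p) ≤ α} (1/2)‖Kᵀp − y‖². Moreover, if p* is a minimizer of the dual problem, then u* = y − Kᵀp* is the (unique) minimizer of the primal problem. -/

import Mathlib

open scoped RealInnerProductSpace

namespace RofAux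

variable {m' : ℕ}

lemma nzero (N : EuclideanSpace ℝ (Fin m') → ℝ)
    (hNhom : ∀ (a : ℝ) (z : EuclideanSpace ℝ (Fin m')), N (a • z) = |a| * N z) :
    N 0 = 0 := by
  have := hNhom 0 0
  simpa using this

lemma nonneg (N : EuclideanSpace ℝ (Fin m') → ℝ)
    (hNhom : ∀ (a : ℝ) (z : EuclideanSpace ℝ (Fin m')), N (a • z) = |a| * N z)
    (hNtri : ∀ z w : EuclideanSpace ℝ (Fin m'), N (z + w) ≤ N z + N w)
    (z : EuclideanSpace ℝ (Fin m')) : 0 ≤ N z := by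
  have h1 := hNtri z ((-1 : ℝ) • z)
  have h2 : z + (-1 : ℝ) • z = 0 := by
    rw [neg_one_smul]; exact add_neg_cancel z
  rw [h2, nzero N hNhom, hNhom] at h1
  simp only [abs_neg, abs_one, one_mul] at h1
  linarith

lemma nsum (N : EuclideanSpace ℝ (Fin m') → ℝ)
    (hNhom : ∀ (a : ℝ) (z : EuclideanSpace ℝ (Fin m')), N (a • z) = |a| * N z)
    (hNtri : ∀ z w : EuclideanSpace ℝ (Fin m'), N (z + w) ≤ N z + N w)
    {ι : Type*} (s : Finset ι) (f : ι → EuclideanSpace ℝ (Fin m')) :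
    N (∑ i ∈ s, f i) ≤ ∑ i ∈ s, N (f i) := by
  classical
  induction s using Finset.cons_induction with
  | empty => simp [nzero N hNhom]
  | cons i s hi ih =>
    rw [Finset.sum_cons, Finset.sum_cons]
    exact le_trans (hNtri _ _) (by linarith)

lemma coord_le_norm (z : EuclideanSpace ℝ (Fin m')) (i : Fin m') : |z i| ≤ ‖z‖ := by
  have h0 := EuclideanSpace.norm_eq z
  have h1 : |z i| = Real.sqrt ((z i) ^ 2) := by rw [Real.sqrt_sq_eq_abs]
  rw [h1, h0]
  apply Real.sqrt_le_sqrt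
  have := Finset.single_le_sum (f := fun j => ‖z j‖ ^ 2) (fun j _ => by positivity)
    (Finset.mem_univ i)
  simpa [Real.norm_eq_abs, sq_abs] using this

lemma upper (N : EuclideanSpace ℝ (Fin m') → ℝ)
    (hNhom : ∀ (a : ℝ) (z : EuclideanSpace ℝ (Fin m')), N (a • z) = |a| * N z)
    (hNtri : ∀ z w : EuclideanSpace ℝ (Fin m'), N (z + w) ≤ N z + N w) :
    ∃ C : ℝ, 0 < C ∧ ∀ z, N z ≤ C * ‖z‖ := by
  classical
  set C0 : ℝ := ∑ i : Fin m', N (EuclideanSpace.single i (1 : ℝ)) with hC0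
  have hC0n : 0 ≤ C0 := Finset.sum_nonneg fun i _ => nonneg N hNhom hNtri _
  refine ⟨C0 + 1, by linarith, fun z => ?_⟩
  have hz : z = ∑ i : Fin m', z i • EuclideanSpace.single i (1 : ℝ) := by
    ext j
    rw [WithLp.ofLp_sum, Finset.sum_apply]
    simp [EuclideanSpace.single_apply]
  calc N z = N (∑ i : Fin m', z i • EuclideanSpace.single i (1 : ℝ)) := by rw [← hz]
    _ ≤ ∑ i : Fin m', N (z i • EuclideanSpace.single i (1 : ℝ)) := nsum N hNhom hNtri _ _
    _ = ∑ i : Fin m', |z i| * N (EuclideanSpace.single i (1 : ℝ)) := by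
        refine Finset.sum_congr rfl fun i _ => ?_
        rw [hNhom]
    _ ≤ ∑ i : Fin m', ‖z‖ * N (EuclideanSpace.single i (1 : ℝ)) := by
        refine Finset.sum_le_sum fun i _ => ?_
        exact mul_le_mul_of_nonneg_right (coord_le_norm z i) (nonneg N hNhom hNtri _)
    _ = C0 * ‖z‖ := by rw [← Finset.mul_sum, mul_comm, hC0]
    _ ≤ (C0 + 1) * ‖z‖ := by
        exact mul_le_mul_of_nonneg_right (by linarith) (norm_nonneg z)

lemma ncont (N : EuclideanSpace ℝ (Fin m') → ℝ)
    (hNhom : ∀ (a : ℝ) (z : EuclideanSpace ℝ (Fin m')), N (a • z) = |a| * N z)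
    (hNtri : ∀ z w : EuclideanSpace ℝ (Fin m'), N (z + w) ≤ N z + N w) :
    Continuous N := by
  obtain ⟨C, hC, hCle⟩ := upper N hNhom hNtri
  have key : ∀ z w : EuclideanSpace ℝ (Fin m'), N z - N w ≤ C * ‖z - w‖ := by
    intro z w
    have h1 : N z ≤ N w + N (z - w) := by
      have := hNtri w (z - w)
      simpa using this
    have := hCle (z - w)
    linarith
  rw [Metric.continuous_iff]
  intro z ε hε
  refine ⟨ε / C, by positivity, fun w hw => ?_⟩
  rw [Real.dist_eq]
  rw [dist_eq_norm] at hw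
  have h1 := key w z
  have h2 := key z w
  have h3 : ‖z - w‖ = ‖w - z‖ := by rw [norm_sub_rev]
  have h4 : C * ‖w - z‖ < C * (ε / C) := by
    exact mul_lt_mul_of_pos_left hw hC
  rw [h3] at h2
  have h5 : C * (ε / C) = ε := by field_simp
  rw [abs_lt]
  constructor <;> linarith

lemma lower (N : EuclideanSpace ℝ (Fin m') → ℝ)
    (hN0 : ∀ z, N z = 0 ↔ z = 0)
    (hNhom : ∀ (a : ℝ) (z : EuclideanSpace ℝ (Fin m')), N (a • z) = |a| * N z)
    (hNtri : ∀ z w : EuclideanSpace ℝ (Fin m'), N (z + w) ≤ N z + N w) :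
    ∃ c : ℝ, 0 < c ∧ ∀ z, c * ‖z‖ ≤ N z := by
  by_cases hm : ∀ z : EuclideanSpace ℝ (Fin m'), z = 0
  · refine ⟨1, one_pos, fun z => ?_⟩
    rw [hm z]
    simp [nzero N hNhom]
  · push_neg at hm
    obtain ⟨z₀, hz₀⟩ := hm
    have hz₀n : ‖z₀‖ ≠ 0 := norm_ne_zero_iff.mpr hz₀
    have hsne : (Metric.sphere (0 : EuclideanSpace ℝ (Fin m')) 1).Nonempty := by
      refine ⟨‖z₀‖⁻¹ • z₀, ?_⟩
      simp [norm_smul, abs_of_nonneg (inv_nonneg.mpr (norm_nonneg z₀)),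
        inv_mul_cancel₀ hz₀n]
    obtain ⟨w, hw, hwmin⟩ := (isCompact_sphere (0 : EuclideanSpace ℝ (Fin m')) 1).exists_isMinOn
      hsne (ncont N hNhom hNtri).continuousOn
    have hwnorm : ‖w‖ = 1 := by simpa using hw
    have hwne : w ≠ 0 := by
      intro h
      rw [h] at hwnorm
      simp at hwnorm
    have hc : 0 < N w := by
      rcases lt_or_eq_of_le (nonneg N hNhom hNtri w) with h | h
      · exact h
      · exact absurd ((hN0 w).mp h.symm) hwne
    refine ⟨N w, hc, fun z => ?_⟩
    rcases eq_or_ne z 0 with rfl | hz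
    · simp [nzero N hNhom]
    · have hzn : (0:ℝ) < ‖z‖ := norm_pos_iff.mpr hz
      have hmem : ‖z‖⁻¹ • z ∈ Metric.sphere (0 : EuclideanSpace ℝ (Fin m')) 1 := by
        simp [norm_smul, abs_of_nonneg (inv_nonneg.mpr (norm_nonneg z)),
          inv_mul_cancel₀ hzn.ne']
      have h1 := isMinOn_iff.mp hwmin _ hmem
      rw [hNhom, abs_of_nonneg (inv_nonneg.mpr (norm_nonneg z))] at h1
      calc N w * ‖z‖ ≤ (‖z‖⁻¹ * N z) * ‖z‖ :=
            mul_le_mul_of_nonneg_right h1 (norm_nonneg z)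
        _ = N z := by field_simp


lemma nstar_le_iff (N : EuclideanSpace ℝ (Fin m') → ℝ)
    (hN0 : ∀ z, N z = 0 ↔ z = 0)
    (hNhom : ∀ (a : ℝ) (z : EuclideanSpace ℝ (Fin m')), N (a • z) = |a| * N z)
    (hNtri : ∀ z w : EuclideanSpace ℝ (Fin m'), N (z + w) ≤ N z + N w)
    (Nstar : EuclideanSpace ℝ (Fin m') → ℝ)
    (hNstar : ∀ p, Nstar p =
      sSup {r : ℝ | ∃ z : EuclideanSpace ℝ (Fin m'), N z ≤ 1 ∧ r = ⟪p, z⟫})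
    (p : EuclideanSpace ℝ (Fin m')) (β : ℝ) (hβ : 0 ≤ β) :
    Nstar p ≤ β ↔ ∀ z, N z ≤ 1 → ⟪p, z⟫ ≤ β := by
  obtain ⟨c, hc, hcle⟩ := lower N hN0 hNhom hNtri
  have hbdd : BddAbove {r : ℝ | ∃ z : EuclideanSpace ℝ (Fin m'), N z ≤ 1 ∧ r = ⟪p, z⟫} := by
    refine ⟨‖p‖ * c⁻¹, fun r hr => ?_⟩
    obtain ⟨z, hz, rfl⟩ := hr
    have h0 : c * ‖z‖ ≤ 1 := le_trans (hcle z) hz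
    have h1 : ‖z‖ ≤ c⁻¹ := by
      calc ‖z‖ = c⁻¹ * (c * ‖z‖) := by field_simp
        _ ≤ c⁻¹ * 1 := mul_le_mul_of_nonneg_left h0 (inv_nonneg.mpr hc.le)
        _ = c⁻¹ := mul_one _
    calc ⟪p, z⟫ ≤ ‖p‖ * ‖z‖ := real_inner_le_norm p z
      _ ≤ ‖p‖ * c⁻¹ := mul_le_mul_of_nonneg_left h1 (norm_nonneg p)
  have hne : {r : ℝ | ∃ z : EuclideanSpace ℝ (Fin m'), N z ≤ 1 ∧ r = ⟪p, z⟫}.Nonempty := by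
    refine ⟨⟪p, (0 : EuclideanSpace ℝ (Fin m'))⟫, 0, ?_, rfl⟩
    simp [nzero N hNhom]
  rw [hNstar p]
  constructor
  · intro h z hz
    exact le_trans (le_csSup hbdd ⟨z, hz, rfl⟩) h
  · intro h
    refine csSup_le hne ?_
    rintro r ⟨z, hz, rfl⟩
    exact h z hz

lemma pairing (N : EuclideanSpace ℝ (Fin m') → ℝ)
    (hN0 : ∀ z, N z = 0 ↔ z = 0)
    (hNhom : ∀ (a : ℝ) (z : EuclideanSpace ℝ (Fin m')), N (a • z) = |a| * N z)
    (hNtri : ∀ z w : EuclideanSpace ℝ (Fin m'), N (z + w) ≤ N z + N w)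
    (Nstar : EuclideanSpace ℝ (Fin m') → ℝ)
    (hNstar : ∀ p, Nstar p =
      sSup {r : ℝ | ∃ z : EuclideanSpace ℝ (Fin m'), N z ≤ 1 ∧ r = ⟪p, z⟫})
    (α : ℝ) (hα : 0 < α) (p : EuclideanSpace ℝ (Fin m')) (hp : Nstar p ≤ α)
    (z : EuclideanSpace ℝ (Fin m')) : ⟪p, z⟫ ≤ α * N z := by
  rcases eq_or_ne z 0 with rfl | hz
  · simp [nzero N hNhom]
  · have hNz : 0 < N z := by
      rcases lt_or_eq_of_le (nonneg N hNhom hNtri z) with h | h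
      · exact h
      · exact absurd ((hN0 z).mp h.symm) hz
    have hmem : N ((N z)⁻¹ • z) ≤ 1 := by
      rw [hNhom, abs_of_pos (inv_pos.mpr hNz), inv_mul_cancel₀ hNz.ne']
    have h2 := (nstar_le_iff N hN0 hNhom hNtri Nstar hNstar p α hα.le).mp hp _ hmem
    rw [real_inner_smul_right] at h2
    calc ⟪p, z⟫ = N z * ((N z)⁻¹ * ⟪p, z⟫) := by field_simp
      _ ≤ N z * α := mul_le_mul_of_nonneg_left h2 hNz.le
      _ = α * N z := mul_comm _ _

lemma hb (N : EuclideanSpace ℝ (Fin m') → ℝ)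
    (hN0 : ∀ z, N z = 0 ↔ z = 0)
    (hNhom : ∀ (a : ℝ) (z : EuclideanSpace ℝ (Fin m')), N (a • z) = |a| * N z)
    (hNtri : ∀ z w : EuclideanSpace ℝ (Fin m'), N (z + w) ≤ N z + N w)
    (Nstar : EuclideanSpace ℝ (Fin m') → ℝ)
    (hNstar : ∀ p, Nstar p =
      sSup {r : ℝ | ∃ z : EuclideanSpace ℝ (Fin m'), N z ≤ 1 ∧ r = ⟪p, z⟫})
    (α : ℝ) (hα : 0 < α) (z : EuclideanSpace ℝ (Fin m')) :
    ∃ q, Nstar q ≤ α ∧ ⟪q, z⟫ = α * N z := by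
  have hiff := fun p => nstar_le_iff N hN0 hNhom hNtri Nstar hNstar p α hα.le
  rcases eq_or_ne z 0 with rfl | hz
  · refine ⟨0, ?_, by simp [nzero N hNhom]⟩
    rw [hiff]
    intro w hw
    simp only [inner_zero_left]
    exact hα.le
  · set f := LinearPMap.mkSpanSingleton (K := ℝ) (L := ℝ) (σ := RingHom.id ℝ) z (N z) hz with hf
    have hfdom : f.domain = Submodule.span ℝ {z} := LinearPMap.domain_mkSpanSingleton _ _ _
    have hfle : ∀ x : f.domain, f x ≤ N x := by
      rintro ⟨x, hx⟩
      have hx' : x ∈ Submodule.span ℝ {z} := hfdom ▸ hx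
      obtain ⟨cc, rfl⟩ := Submodule.mem_span_singleton.mp hx'
      have happ : f ⟨cc • z, hx⟩ = cc • N z :=
        LinearPMap.mkSpanSingleton'_apply z (N z) _ cc hx
      rw [happ, smul_eq_mul, hNhom]
      have := nonneg N hNhom hNtri z
      have hle : cc ≤ |cc| := le_abs_self cc
      nlinarith
    obtain ⟨g, hg1, hg2⟩ := exists_extension_of_le_sublinear f N
      (fun c hc x => by rw [hNhom, abs_of_pos hc]) hNtri hfle
    have hgz : g z = N z := by
      have hmem : z ∈ f.domain := hfdom ▸ Submodule.mem_span_singleton_self z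
      have h1 := hg1 ⟨z, hmem⟩
      have h2 : f ⟨z, hmem⟩ = N z := by
        have : f ⟨(1 : ℝ) • z, by simpa using hmem⟩ = (1 : ℝ) • N z :=
          LinearPMap.mkSpanSingleton'_apply z (N z) _ 1 (by simpa using hmem)
        simpa using this
      rw [← h2]
      exact h1
    set q' := (InnerProductSpace.toDual ℝ (EuclideanSpace ℝ (Fin m'))).symm
      (LinearMap.toContinuousLinearMap g) with hq'
    have hq'app : ∀ w, ⟪q', w⟫ = g w := by
      intro w
      rw [hq', InnerProductSpace.toDual_symm_apply]
      simp
    refine ⟨α • q', ?_, ?_⟩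
    · rw [hiff]
      intro w hw
      rw [real_inner_smul_left, hq'app]
      nlinarith [hg2 w]
    · rw [real_inner_smul_left, hq'app, hgz]

end RofAux

open scoped RealInnerProductSpace


set_option maxHeartbeats 2000000 in
/-- **Strong duality for the generalized ROF problem.** With `K` linear, `N` a
norm on `ℝᵐ` with dual norm `N*(p) = sup{⟨p,z⟩ : N(z) ≤ 1}`, `α > 0`, `y ∈ ℝⁿ`:
`min_u (α N(Ku) + ½‖u − y‖²) = ½‖y‖² − min_{N*(p) ≤ α} ½‖Kᵀp − y‖²` (both minima
are attained), and if `p*` minimizes the dual problem then `u* = y − Kᵀp*` is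
the unique minimizer of the primal problem. -/
theorem stmt14 {n m' : ℕ}
    (K : EuclideanSpace ℝ (Fin n) →L[ℝ] EuclideanSpace ℝ (Fin m'))
    (N : EuclideanSpace ℝ (Fin m') → ℝ)
    (hN0 : ∀ z, N z = 0 ↔ z = 0)
    (hNhom : ∀ (a : ℝ) (z : EuclideanSpace ℝ (Fin m')), N (a • z) = |a| * N z)
    (hNtri : ∀ z w : EuclideanSpace ℝ (Fin m'), N (z + w) ≤ N z + N w)
    (Nstar : EuclideanSpace ℝ (Fin m') → ℝ)
    (hNstar : ∀ p, Nstar p =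
      sSup {r : ℝ | ∃ z : EuclideanSpace ℝ (Fin m'), N z ≤ 1 ∧ r = ⟪p, z⟫})
    (α : ℝ) (hα : 0 < α) (y : EuclideanSpace ℝ (Fin n)) :
    (∃ u0 : EuclideanSpace ℝ (Fin n), ∀ u,
      α * N (K u0) + (1 / 2) * ‖u0 - y‖ ^ 2 ≤ α * N (K u) + (1 / 2) * ‖u - y‖ ^ 2) ∧
    (∃ p0 : EuclideanSpace ℝ (Fin m'), Nstar p0 ≤ α ∧ ∀ p, Nstar p ≤ α →
      (1 / 2) * ‖(ContinuousLinearMap.adjoint K) p0 - y‖ ^ 2 ≤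
        (1 / 2) * ‖(ContinuousLinearMap.adjoint K) p - y‖ ^ 2) ∧
    (∀ (u0 : EuclideanSpace ℝ (Fin n)) (p0 : EuclideanSpace ℝ (Fin m')),
      (∀ u, α * N (K u0) + (1 / 2) * ‖u0 - y‖ ^ 2 ≤
        α * N (K u) + (1 / 2) * ‖u - y‖ ^ 2) →
      Nstar p0 ≤ α →
      (∀ p, Nstar p ≤ α →
        (1 / 2) * ‖(ContinuousLinearMap.adjoint K) p0 - y‖ ^ 2 ≤
          (1 / 2) * ‖(ContinuousLinearMap.adjoint K) p - y‖ ^ 2) →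
      α * N (K u0) + (1 / 2) * ‖u0 - y‖ ^ 2 =
        (1 / 2) * ‖y‖ ^ 2 - (1 / 2) * ‖(ContinuousLinearMap.adjoint K) p0 - y‖ ^ 2) ∧
    (∀ p0 : EuclideanSpace ℝ (Fin m'), Nstar p0 ≤ α →
      (∀ p, Nstar p ≤ α →
        (1 / 2) * ‖(ContinuousLinearMap.adjoint K) p0 - y‖ ^ 2 ≤
          (1 / 2) * ‖(ContinuousLinearMap.adjoint K) p - y‖ ^ 2) →
      (∀ u, α * N (K (y - (ContinuousLinearMap.adjoint K) p0)) +
          (1 / 2) * ‖(y - (ContinuousLinearMap.adjoint K) p0) - y‖ ^ 2 ≤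
        α * N (K u) + (1 / 2) * ‖u - y‖ ^ 2) ∧
      (∀ u : EuclideanSpace ℝ (Fin n),
        (∀ w, α * N (K u) + (1 / 2) * ‖u - y‖ ^ 2 ≤
          α * N (K w) + (1 / 2) * ‖w - y‖ ^ 2) →
        u = y - (ContinuousLinearMap.adjoint K) p0)) := by
  classical
  set A := ContinuousLinearMap.adjoint K with hA
  have hNnn := RofAux.nonneg N hNhom hNtri
  have hN00 : N 0 = 0 := RofAux.nzero N hNhom
  have hNcont := RofAux.ncont N hNhom hNtri
  obtain ⟨C, hCpos, hCle⟩ := RofAux.upper N hNhom hNtri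
  have hiff := fun p => RofAux.nstar_le_iff N hN0 hNhom hNtri Nstar hNstar p α hα.le
  have hpair := RofAux.pairing N hN0 hNhom hNtri Nstar hNstar α hα
  have hhb := RofAux.hb N hN0 hNhom hNtri Nstar hNstar α hα
  have hadj : ∀ (p : EuclideanSpace ℝ (Fin m')) (u : EuclideanSpace ℝ (Fin n)),
      ⟪A p, u⟫ = ⟪p, K u⟫ := fun p u => ContinuousLinearMap.adjoint_inner_left K u p
  -- weak duality
  have weak : ∀ (u : EuclideanSpace ℝ (Fin n)) (p : EuclideanSpace ℝ (Fin m')),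
      Nstar p ≤ α →
      (1 / 2) * ‖y‖ ^ 2 - (1 / 2) * ‖A p - y‖ ^ 2
        ≤ α * N (K u) + (1 / 2) * ‖u - y‖ ^ 2 := by
    intro u p hp
    have h1 : ⟪p, K u⟫ ≤ α * N (K u) := hpair p hp (K u)
    have h2 := hadj p u
    have h3 : (0:ℝ) ≤ ‖(u - y) + A p‖ ^ 2 := sq_nonneg _
    have h4 := norm_add_sq_real (u - y) (A p)
    have h5 := norm_sub_sq_real (A p) y
    have h6 : ⟪u - y, A p⟫ = ⟪A p, u⟫ - ⟪A p, y⟫ := by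
      rw [real_inner_comm, inner_sub_right]
    linarith
  -- primal existence
  have Fcont : Continuous (fun u : EuclideanSpace ℝ (Fin n) =>
      α * N (K u) + (1 / 2) * ‖u - y‖ ^ 2) := by
    apply Continuous.add
    · exact continuous_const.mul (hNcont.comp K.continuous)
    · exact continuous_const.mul (((continuous_id.sub continuous_const).norm).pow 2)
  have hFynn : 0 ≤ α * N (K y) := mul_nonneg hα.le (hNnn _)
  set R : ℝ := Real.sqrt (2 * (α * N (K y))) + 1 with hR
  have hRpos : 0 < R := by positivity
  have hR2 : 2 * (α * N (K y)) ≤ R ^ 2 := by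
    have h1 : Real.sqrt (2 * (α * N (K y))) ≤ R := by rw [hR]; linarith
    nlinarith [Real.sq_sqrt (by linarith : (0:ℝ) ≤ 2 * (α * N (K y))),
      Real.sqrt_nonneg (2 * (α * N (K y)))]
  obtain ⟨u0, hu0B, hu0min⟩ := (isCompact_closedBall y R).exists_isMinOn
    ⟨y, Metric.mem_closedBall_self hRpos.le⟩ Fcont.continuousOn
  have hu0min' : ∀ u ∈ Metric.closedBall y R,
      α * N (K u0) + (1 / 2) * ‖u0 - y‖ ^ 2 ≤ α * N (K u) + (1 / 2) * ‖u - y‖ ^ 2 :=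
    fun u hu => isMinOn_iff.mp hu0min u hu
  have hu0 : ∀ u, α * N (K u0) + (1 / 2) * ‖u0 - y‖ ^ 2
      ≤ α * N (K u) + (1 / 2) * ‖u - y‖ ^ 2 := by
    intro u
    by_cases hu : u ∈ Metric.closedBall y R
    · exact hu0min' u hu
    · have h1 : R < ‖u - y‖ := by
        rw [Metric.mem_closedBall, not_le, dist_eq_norm] at hu
        exact hu
      have h2 := hu0min' y (Metric.mem_closedBall_self hRpos.le)
      have hyy : ‖y - y‖ = 0 := by simp
      rw [hyy] at h2
      norm_num at h2
      have h4 : 0 ≤ α * N (K u) := mul_nonneg hα.le (hNnn _)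
      have h5 : R ^ 2 < ‖u - y‖ ^ 2 := by
        have h6 := norm_nonneg (u - y)
        nlinarith [h1, hRpos, h6]
      linarith [h2, hR2, h5, h4]
  -- dual existence
  set S : Set (EuclideanSpace ℝ (Fin m')) := {p | Nstar p ≤ α} with hS
  have hS0 : (0 : EuclideanSpace ℝ (Fin m')) ∈ S := by
    rw [hS, Set.mem_setOf_eq, hiff]
    intro z hz
    simp only [inner_zero_left]
    exact hα.le
  have hSclosed : IsClosed S := by
    have hSeq : S = ⋂ z ∈ {z : EuclideanSpace ℝ (Fin m') | N z ≤ 1},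
        {p : EuclideanSpace ℝ (Fin m') | ⟪p, z⟫ ≤ α} := by
      ext p
      simp only [hS, Set.mem_iInter, Set.mem_setOf_eq]
      exact hiff p
    rw [hSeq]
    refine isClosed_biInter fun z hz => isClosed_le ?_ continuous_const
    exact Continuous.inner continuous_id continuous_const
  have hSsub : S ⊆ Metric.closedBall 0 (α * C) := by
    intro p hp
    rw [Metric.mem_closedBall, dist_zero_right]
    rcases eq_or_ne p 0 with rfl | hpne
    · simp only [norm_zero]
      positivity
    · have hpn : 0 < ‖p‖ := norm_pos_iff.mpr hpne
      have hmem : N ((C * ‖p‖)⁻¹ • p) ≤ 1 := by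
        rw [hNhom, abs_of_pos (by positivity)]
        calc (C * ‖p‖)⁻¹ * N p ≤ (C * ‖p‖)⁻¹ * (C * ‖p‖) :=
              mul_le_mul_of_nonneg_left (hCle p) (by positivity)
          _ = 1 := inv_mul_cancel₀ (by positivity)
      have h1 := (hiff p).mp hp _ hmem
      rw [real_inner_smul_right, real_inner_self_eq_norm_sq] at h1
      have h2 : (C * ‖p‖)⁻¹ * ‖p‖ ^ 2 = ‖p‖ / C := by
        field_simp
      rw [h2] at h1
      calc ‖p‖ = (‖p‖ / C) * C := by field_simp
        _ ≤ α * C := mul_le_mul_of_nonneg_right h1 hCpos.le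
  have hScompact : IsCompact S :=
    (isCompact_closedBall (0 : EuclideanSpace ℝ (Fin m')) (α * C)).of_isClosed_subset
      hSclosed hSsub
  have Gcont : Continuous (fun p : EuclideanSpace ℝ (Fin m') =>
      (1 / 2) * ‖A p - y‖ ^ 2) :=
    continuous_const.mul (((A.continuous.sub continuous_const).norm).pow 2)
  obtain ⟨p0, hp0S, hp0min⟩ := hScompact.exists_isMinOn ⟨0, hS0⟩ Gcont.continuousOn
  have hp0 : ∀ p, Nstar p ≤ α →
      (1 / 2) * ‖A p0 - y‖ ^ 2 ≤ (1 / 2) * ‖A p - y‖ ^ 2 :=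
    fun p hp => isMinOn_iff.mp hp0min p hp
  -- complementarity at a dual minimizer
  have key : ∀ q0 : EuclideanSpace ℝ (Fin m'), Nstar q0 ≤ α →
      (∀ p, Nstar p ≤ α →
        (1 / 2) * ‖A q0 - y‖ ^ 2 ≤ (1 / 2) * ‖A p - y‖ ^ 2) →
      ⟪q0, K (y - A q0)⟫ = α * N (K (y - A q0)) := by
    intro q0 hq0 hmin
    obtain ⟨q, hqf, hq⟩ := hhb (K (y - A q0))
    have hvar : 0 ≤ ⟪A q0 - y, A q - A q0⟫ := by
      by_contra hneg
      push_neg at hneg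
      have hbnn : (0:ℝ) ≤ ‖A q - A q0‖ ^ 2 := by positivity
      set cc : ℝ := ⟪A q0 - y, A q - A q0⟫ with hcc
      set b : ℝ := ‖A q - A q0‖ ^ 2 with hb
      set t : ℝ := min 1 ((-cc) / (b + 1)) with ht
      have ht0 : 0 < t := lt_min one_pos (div_pos (by linarith) (by linarith))
      have ht1 : t ≤ 1 := min_le_left _ _
      have htb : t * (b + 1) ≤ -cc := by
        have h1 : t ≤ (-cc) / (b + 1) := min_le_right _ _
        exact (le_div_iff₀ (by linarith)).mp h1
      have hfeas : Nstar (q0 + t • (q - q0)) ≤ α := by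
        rw [hiff]
        intro w hw
        have h1 := (hiff q0).mp hq0 w hw
        have h2 := (hiff q).mp hqf w hw
        rw [inner_add_left, real_inner_smul_left, inner_sub_left]
        nlinarith
      have h3 := hmin _ hfeas
      have h4 : A (q0 + t • (q - q0)) - y = (A q0 - y) + t • (A q - A q0) := by
        rw [map_add, map_smul, map_sub]
        module
      rw [h4] at h3
      have h5 := norm_add_sq_real (A q0 - y) (t • (A q - A q0))
      rw [real_inner_smul_right, norm_smul, Real.norm_eq_abs, abs_of_pos ht0] at h5
      have h6 : (t * ‖A q - A q0‖) ^ 2 = t ^ 2 * b := by rw [hb]; ring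
      rw [h6] at h5
      have h7 : 0 ≤ 2 * t * cc + t ^ 2 * b := by
        rw [← hcc] at h5
        nlinarith [h3, h5]
      have h8 : 0 ≤ 2 * cc + t * b := by nlinarith [h7, ht0]
      nlinarith [h8, htb, ht0, hneg]
    have h10 : K (A q0 - y) = -(K (y - A q0)) := by
      rw [← map_neg K]
      congr 1
      abel
    have h11 : ⟪q, K (y - A q0)⟫ ≤ ⟪q0, K (y - A q0)⟫ := by
      have h' : 0 ≤ ⟪A (q - q0), A q0 - y⟫ := by
        rw [map_sub, real_inner_comm]
        exact hvar
      rw [hadj, h10, inner_neg_right, inner_sub_left] at h'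
      linarith
    have h12 : ⟪q0, K (y - A q0)⟫ ≤ α * N (K (y - A q0)) := hpair q0 hq0 _
    rw [hq] at h11
    linarith
  -- value identity at a dual minimizer
  have val : ∀ p1 : EuclideanSpace ℝ (Fin m'), Nstar p1 ≤ α →
      (∀ p, Nstar p ≤ α →
        (1 / 2) * ‖A p1 - y‖ ^ 2 ≤ (1 / 2) * ‖A p - y‖ ^ 2) →
      α * N (K (y - A p1)) + (1 / 2) * ‖(y - A p1) - y‖ ^ 2
        = (1 / 2) * ‖y‖ ^ 2 - (1 / 2) * ‖A p1 - y‖ ^ 2 := by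
    intro p1 hp1 hmin
    have hkey := key p1 hp1 hmin
    have h1 : ⟪p1, K (y - A p1)⟫ = ⟪A p1, y - A p1⟫ := (hadj p1 _).symm
    have h2 : ⟪A p1, y - A p1⟫ = ⟪A p1, y⟫ - ‖A p1‖ ^ 2 := by
      rw [inner_sub_right, real_inner_self_eq_norm_sq]
    have h3 : ‖(y - A p1) - y‖ ^ 2 = ‖A p1‖ ^ 2 := by
      have he : (y - A p1) - y = -(A p1) := by abel
      rw [he, norm_neg]
    have h4 := norm_sub_sq_real (A p1) y
    rw [h3]
    linarith
  refine ⟨⟨u0, hu0⟩, ⟨p0, hp0S, hp0⟩, ?_, ?_⟩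
  · intro u1 p1 hu1 hp1f hp1m
    have hval := val p1 hp1f hp1m
    have h1 := hu1 (y - A p1)
    have h2 := weak u1 p1 hp1f
    linarith
  · intro p1 hp1f hp1m
    have hval := val p1 hp1f hp1m
    have hminu : ∀ u, α * N (K (y - A p1)) + (1 / 2) * ‖(y - A p1) - y‖ ^ 2
        ≤ α * N (K u) + (1 / 2) * ‖u - y‖ ^ 2 := by
      intro u
      have h2 := weak u p1 hp1f
      linarith
    refine ⟨hminu, ?_⟩
    intro u humin
    have h1 := humin (y - A p1)
    have h2 := hminu u
    set mpt := (2:ℝ)⁻¹ • (u + (y - A p1)) with hm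
    have hNm : N (K mpt) ≤ (1 / 2) * N (K u) + (1 / 2) * N (K (y - A p1)) := by
      have hKm : K mpt = (2:ℝ)⁻¹ • (K u + K (y - A p1)) := by
        rw [hm, map_smul, map_add]
      rw [hKm, hNhom, abs_of_pos (by norm_num : (0:ℝ) < (2:ℝ)⁻¹)]
      nlinarith [hNtri (K u) (K (y - A p1))]
    have hmid : mpt - y = (2:ℝ)⁻¹ • ((u - y) + ((y - A p1) - y)) := by
      rw [hm]
      module
    have hsub : (u - y) - ((y - A p1) - y) = u - (y - A p1) := by abel
    have hpar := parallelogram_law_with_norm ℝ (u - y) ((y - A p1) - y)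
    rw [hsub] at hpar
    have hq2 : ‖mpt - y‖ ^ 2 = (1 / 2) * ‖u - y‖ ^ 2
        + (1 / 2) * ‖(y - A p1) - y‖ ^ 2 - (1 / 4) * ‖u - (y - A p1)‖ ^ 2 := by
      rw [hmid, norm_smul, Real.norm_eq_abs,
        abs_of_pos (by norm_num : (0:ℝ) < (2:ℝ)⁻¹)]
      linear_combination hpar / 4
    have h3 := humin mpt
    have h4 : ‖u - (y - A p1)‖ ^ 2 ≤ 0 := by
      nlinarith [mul_le_mul_of_nonneg_left hNm hα.le, hq2, h1, h2, h3]
    have h5 : ‖u - (y - A p1)‖ ^ 2 = 0 := le_antisymm h4 (sq_nonneg _)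
    have h6 : u - (y - A p1) = 0 := by
      rw [← norm_eq_zero]
      exact (pow_eq_zero_iff two_ne_zero).mp h5
    exact sub_eq_zero.mp h6
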